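/- Let X be a compact metric space, μ a Borel probability measure on X, and δ, ε > 0. Then there exist finitely many continuous functions f_1,…,f_m : X → [0,1] with pairwise disjoint open supports, each open support having diameter less than δ, such that μ applied to 1 − (f_1 + ⋯ + f_m) is less than ε, i.e. ∫ (1 − ∑_i f_i) dμ < ε. -/

import Mathlib

open MeasureTheory Metric

theorem stmt3 (X : Type*) [MetricSpace X] [CompactSpace X]
    [MeasurableSpace X] [BorelSpace X]
    (μ : ProbabilityMeasure X) (δ ε : ℝ) (hδ : 0 < δ) (hε : 0 < ε) :
    ∃ (m : ℕ) (f : Fin m → C(X, ℝ)),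
      (∀ i, ∀ x, f i x ∈ Set.Icc (0 : ℝ) 1) ∧
      (∀ i j, i ≠ j → ∀ x, f i x * f j x = 0) ∧
      (∀ i, Metric.diam {x | f i x ≠ 0} < δ) ∧
      (∫ x, (1 - ∑ i, f i x) ∂(μ : Measure X)) < ε := by
  set ν : Measure X := (μ : Measure X) with hν
  have hX : Nonempty X := by
    by_contra h
    rw [not_nonempty_iff] at h
    have h1 : ν Set.univ = 1 := measure_univ
    rw [Set.univ_eq_empty_iff.mpr h, measure_empty] at h1
    exact zero_ne_one h1
  obtain ⟨x0⟩ := hX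
  -- finite cover by small balls
  obtain ⟨s, hs⟩ := isCompact_univ.elim_finite_subcover
    (fun x : X => ball x (δ/8)) (fun _ => isOpen_ball)
    (fun x _ => Set.mem_iUnion.2 ⟨x, mem_ball_self (by linarith)⟩)
  set l := s.toList with hl
  set n := l.length with hn
  set c : ℕ → X := fun k => l.getD k x0 with hc
  set B : ℕ → Set X := fun k => if k < n then ball (c k) (δ/8) else ∅ with hB
  have hn0 : 0 < n := by
    obtain ⟨y, hy, -⟩ := Set.mem_iUnion₂.1 (hs (Set.mem_univ x0))
    exact List.length_pos_iff.2 (List.ne_nil_of_mem (Finset.mem_toList.2 hy))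
  have hBunion : (⋃ k, B k) = Set.univ := by
    apply Set.eq_univ_of_forall
    intro x
    obtain ⟨y, hy, hxy⟩ := Set.mem_iUnion₂.1 (hs (Set.mem_univ x))
    obtain ⟨k, hkn, hky⟩ := List.mem_iff_getElem.1 (Finset.mem_toList.2 hy)
    refine Set.mem_iUnion.2 ⟨k, ?_⟩
    rw [hB]
    dsimp only
    rw [if_pos hkn]
    have hck : c k = y := by rw [hc]; dsimp only; rw [List.getD_eq_getElem l x0 hkn, hky]
    rw [hck]; exact hxy
  have hBmeas : ∀ k, MeasurableSet (B k) := by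
    intro k
    rw [hB]; dsimp only
    split
    · exact measurableSet_ball
    · exact MeasurableSet.empty
  have hD : ∀ k, MeasurableSet (disjointed B k) := MeasurableSet.disjointed hBmeas
  -- inner regular compacts inside the disjointed pieces
  have hε'0 : (0:ℝ) < ε / (2*n) := by positivity
  have hε'ne : ENNReal.ofReal (ε/(2*n)) ≠ 0 := by
    simp [ENNReal.ofReal_eq_zero, not_le, hε'0]
  choose K hKsub hKcomp hKlt using fun k : ℕ =>
    (hD k).exists_isCompact_lt_add (μ := ν) (measure_ne_top ν _) hε'ne
  have hKdisj : ∀ k m : ℕ, k ≠ m → Disjoint (K k) (K m) := fun k m h =>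
    ((disjoint_disjointed B) h).mono (hKsub k) (hKsub m)
  -- separation radius
  have hpair : ∀ p : Fin n × Fin n, ∃ ρ, 0 < ρ ∧ (p.1 ≠ p.2 →
      Disjoint (thickening ρ (K (p.1:ℕ))) (thickening ρ (K (p.2:ℕ)))) := by
    intro p
    rcases eq_or_ne p.1 p.2 with h | h
    · exact ⟨1, one_pos, fun h' => absurd h h'⟩
    · have hd : Disjoint (K (p.1:ℕ)) (K (p.2:ℕ)) :=
        hKdisj _ _ (fun hh => h (Fin.ext hh))
      obtain ⟨ρ, hρ, hdd⟩ := hd.exists_thickenings (hKcomp _) (hKcomp _).isClosed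
      exact ⟨ρ, hρ, fun _ => hdd⟩
  choose φ hφpos hφdisj using hpair
  have : Nonempty (Fin n) := ⟨⟨0, hn0⟩⟩
  set r := min (δ/8) (Finset.univ.inf' Finset.univ_nonempty φ) with hrdef
  have hr0 : 0 < r := lt_min (by linarith)
    ((Finset.lt_inf'_iff _).2 fun p _ => hφpos p)
  have hr8 : r ≤ δ/8 := min_le_left _ _
  set U : Fin n → Set X := fun i => thickening r (K (i:ℕ)) with hU
  have hUdisj : ∀ i j : Fin n, i ≠ j → Disjoint (U i) (U j) := by
    intro i j hij
    have hrφ : r ≤ φ (i, j) :=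
      le_trans (min_le_right _ _) (Finset.inf'_le _ (Finset.mem_univ _))
    exact (hφdisj (i, j) hij).mono (thickening_mono hrφ _) (thickening_mono hrφ _)
  -- Urysohn functions
  have hurys : ∀ i : Fin n, ∃ f : C(X, ℝ), Set.EqOn f 0 (U i)ᶜ ∧ Set.EqOn f 1 (K (i:ℕ)) ∧
      ∀ x, f x ∈ Set.Icc (0:ℝ) 1 := fun i =>
    exists_continuous_zero_one_of_isClosed isOpen_thickening.isClosed_compl
      (hKcomp _).isClosed
      (disjoint_compl_left.mono_right (self_subset_thickening hr0 _))
  choose f hf0 hf1 hficc using hurys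
  refine ⟨n, f, fun i => hficc i, ?_, ?_, ?_⟩
  · -- disjoint supports
    intro i j hij x
    by_cases hx : x ∈ U i
    · have hx' : x ∉ U j := Set.disjoint_left.1 (hUdisj i j hij) hx
      rw [hf0 j hx', Pi.zero_apply, mul_zero]
    · rw [hf0 i hx, Pi.zero_apply, zero_mul]
  · -- small diameter
    intro i
    have hsub : {x | f i x ≠ 0} ⊆ ball (c i) (δ/4) := by
      intro x hx
      have hxU : x ∈ U i := by
        by_contra hxU
        exact hx (hf0 i hxU)
      obtain ⟨z, hz, hdist⟩ := mem_thickening_iff.1 hxU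
      have hzB : z ∈ B (i:ℕ) := disjointed_subset B (i:ℕ) (hKsub (i:ℕ) hz)
      have hzball : z ∈ ball (c (i:ℕ)) (δ/8) := by
        rw [hB] at hzB; dsimp only at hzB; rwa [if_pos i.isLt] at hzB
      rw [mem_ball] at hzball ⊢
      have htri : dist x (c (i:ℕ)) ≤ dist x z + dist z (c (i:ℕ)) := dist_triangle _ _ _
      linarith
    calc Metric.diam {x | f i x ≠ 0} ≤ Metric.diam (ball (c (i:ℕ)) (δ/4)) :=
          diam_mono hsub isBounded_ball
      _ ≤ 2 * (δ/4) := diam_ball (by linarith)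
      _ < δ := by linarith
  · -- integral bound
    set S := (⋃ i : Fin n, K (i:ℕ))ᶜ with hS
    have hSmeas : MeasurableSet S :=
      (MeasurableSet.iUnion fun i : Fin n => (hKcomp (i:ℕ)).isClosed.measurableSet).compl
    have hpt : ∀ x, 1 - ∑ i, f i x ≤ S.indicator (fun _ => (1:ℝ)) x := by
      intro x
      by_cases hx : x ∈ S
      · rw [Set.indicator_of_mem hx]
        have h0 : 0 ≤ ∑ i, f i x := Finset.sum_nonneg fun i _ => (hficc i x).1
        linarith
      · rw [Set.indicator_of_notMem hx]
        have hx' : x ∈ ⋃ i : Fin n, K (i:ℕ) := not_not.1 hx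
        obtain ⟨j, hj⟩ := Set.mem_iUnion.1 hx'
        have h1 : f j x = 1 := hf1 j hj
        have hle : f j x ≤ ∑ i, f i x :=
          Finset.single_le_sum (fun i _ => (hficc i x).1) (Finset.mem_univ j)
        linarith
    have hint1 : Integrable (fun x => 1 - ∑ i, f i x) ν :=
      (continuous_const.sub (continuous_finset_sum _ fun i _ => (f i).continuous)).integrable_of_hasCompactSupport
        (HasCompactSupport.of_compactSpace _)
    have hint2 : Integrable (S.indicator fun _ => (1:ℝ)) ν :=
      (integrable_const (1:ℝ)).indicator hSmeas
    have hdiff : ∀ k : ℕ, ν (disjointed B k \ K k) < ENNReal.ofReal (ε/(2*n)) := fun k =>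
      measure_diff_lt_of_lt_add (hKcomp k).isClosed.measurableSet.nullMeasurableSet
        (hKsub k) (measure_ne_top ν _) (hKlt k)
    have hSsub : S ⊆ ⋃ k ∈ Finset.range n, (disjointed B k \ K k) := by
      intro x hx
      have hxu : x ∈ ⋃ k, disjointed B k := by
        rw [iUnion_disjointed, hBunion]; trivial
      obtain ⟨k, hk⟩ := Set.mem_iUnion.1 hxu
      have hkn : k < n := by
        by_contra h
        have hsub := disjointed_subset B k hk
        rw [hB] at hsub; dsimp only at hsub
        rw [if_neg h] at hsub
        exact hsub
      refine Set.mem_biUnion (Finset.mem_range.2 hkn) ⟨hk, fun hxK => ?_⟩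
      exact hx (Set.mem_iUnion.2 ⟨⟨k, hkn⟩, hxK⟩)
    have hbound : ν S < ENNReal.ofReal ε := by
      calc ν S ≤ ∑ k ∈ Finset.range n, ν (disjointed B k \ K k) :=
            (measure_mono hSsub).trans (measure_biUnion_finset_le _ _)
        _ ≤ ∑ _k ∈ Finset.range n, ENNReal.ofReal (ε/(2*n)) :=
            Finset.sum_le_sum (fun k _ => (hdiff k).le)
        _ = (n : ENNReal) * ENNReal.ofReal (ε/(2*n)) := by
            rw [Finset.sum_const, Finset.card_range, nsmul_eq_mul]
        _ = ENNReal.ofReal ((n:ℝ) * (ε/(2*n))) := by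
            rw [ENNReal.ofReal_mul (by positivity), ENNReal.ofReal_natCast]
        _ = ENNReal.ofReal (ε/2) := by
            have hnne : (n:ℝ) ≠ 0 := Nat.cast_ne_zero.2 hn0.ne'
            have hcalc : (n:ℝ) * (ε/(2*n)) = ε/2 := by field_simp
            rw [hcalc]
        _ < ENNReal.ofReal ε := (ENNReal.ofReal_lt_ofReal_iff hε).2 (by linarith)
    calc (∫ x, (1 - ∑ i, f i x) ∂ν) ≤ ∫ x, S.indicator (fun _ => (1:ℝ)) x ∂ν :=
          integral_mono hint1 hint2 hpt
      _ = (ν S).toReal := by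
          rw [integral_indicator_const _ hSmeas, smul_eq_mul, mul_one]; rfl
      _ < ε := ENNReal.toReal_lt_of_lt_ofReal hbound
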